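/- Under the assumptions on H, ℓ, s and u in the context: for every t ∈ [0, ℓ] and every r ∈ (0, ℓ) with s(t) − 1 < H·r < s(t) + 1, one has u(t) − (1/H)·√(1 − (s(t) − H·t)²) ≤ u(r) − (1/H)·√(1 − (s(t) − H·r)²). -/

import Mathlib

open Set intervalIntegral

private lemma gmono_aux {x y : ℝ} (hx0 : 0 ≤ x) (hy : |y| < 1) (hxy : x ≤ y) :
    x / Real.sqrt (1 - x ^ 2) ≤ y / Real.sqrt (1 - y ^ 2) := by
  rw [abs_lt] at hy
  have hy2 : 0 < 1 - y ^ 2 := by nlinarith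
  have hx2 : 0 < 1 - x ^ 2 := by nlinarith
  have h1 : Real.sqrt (1 - y ^ 2) ≤ Real.sqrt (1 - x ^ 2) := by
    apply Real.sqrt_le_sqrt; nlinarith
  exact div_le_div₀ (by linarith) hxy (Real.sqrt_pos.mpr hy2) h1

private lemma gmono {x y : ℝ} (hx : |x| < 1) (hy : |y| < 1) (hxy : x ≤ y) :
    x / Real.sqrt (1 - x ^ 2) ≤ y / Real.sqrt (1 - y ^ 2) := by
  rcases le_or_gt 0 x with hx0 | hx0
  · exact gmono_aux hx0 hy hxy
  · rcases le_or_gt 0 y with hy0 | hy0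
    · have h1 : x / Real.sqrt (1 - x ^ 2) ≤ 0 :=
        div_nonpos_of_nonpos_of_nonneg hx0.le (Real.sqrt_nonneg _)
      have h2 : 0 ≤ y / Real.sqrt (1 - y ^ 2) :=
        div_nonneg hy0 (Real.sqrt_nonneg _)
      linarith
    · have := gmono_aux (x := -y) (y := -x) (by linarith)
        (by rwa [abs_neg]) (by linarith)
      rw [neg_sq, neg_sq] at this
      simp only [neg_div, Even.neg_pow (even_two)] at this
      linarith

theorem cantor_profile_tangent_ball_inequality
    (H ℓ : ℝ) (hH : 0 < H) (hℓ : 0 < ℓ) (hHℓ : H * ℓ < 2)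
    (s : ℝ → ℝ) (hscont : Continuous s) (hsmono : Monotone s)
    (hs0 : s 0 = 0) (hsℓ : s ℓ = H * ℓ)
    (hsym : ∀ t ∈ Set.Icc (0 : ℝ) ℓ, s t + s (ℓ - t) = H * ℓ)
    (hgt : ∀ t ∈ Set.Ioo (0 : ℝ) (ℓ / 2), H * t < s t)
    (hbd : ∀ t ∈ Set.Icc (0 : ℝ) ℓ, |s t - H * t| ≤ H * ℓ / 2)
    (u : ℝ → ℝ)
    (hu : ∀ t, u t = ∫ r in (0 : ℝ)..t,
      (s r - H * r) / Real.sqrt (1 - (s r - H * r) ^ 2)) :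
    ∀ t ∈ Set.Icc (0 : ℝ) ℓ, ∀ r ∈ Set.Ioo (0 : ℝ) ℓ,
      s t - 1 < H * r → H * r < s t + 1 →
      u t - (1 / H) * Real.sqrt (1 - (s t - H * t) ^ 2) ≤
        u r - (1 / H) * Real.sqrt (1 - (s t - H * r) ^ 2) := by
  intro t ht r hr hr1 hr2
  set c := s t with hc
  set G : ℝ → ℝ := fun ρ => (s ρ - H * ρ) / Real.sqrt (1 - (s ρ - H * ρ) ^ 2) with hG
  set f : ℝ → ℝ := fun ρ => -((c - H * ρ) / Real.sqrt (1 - (c - H * ρ) ^ 2)) with hf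
  have hlt1 : H * ℓ / 2 < 1 := by linarith
  -- bounds on s ρ - H ρ on [0, ℓ]
  have hden : ∀ ρ ∈ Icc (0:ℝ) ℓ, 0 < 1 - (s ρ - H * ρ) ^ 2 := by
    intro ρ hρ
    have h1 := hbd ρ hρ
    nlinarith [sq_abs (s ρ - H * ρ), abs_nonneg (s ρ - H * ρ)]
  -- |c - Hρ| < 1 on uIcc t r
  have hct : |c - H * t| < 1 := lt_of_le_of_lt (hbd t ht) hlt1
  rw [abs_lt] at hct
  have hcr : -1 < c - H * r ∧ c - H * r < 1 := ⟨by linarith, by linarith⟩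
  have hcρ : ∀ ρ ∈ uIcc t r, -1 < c - H * ρ ∧ c - H * ρ < 1 := by
    intro ρ hρ
    rw [Set.mem_uIcc] at hρ
    constructor
    · rcases hρ with ⟨h1, h2⟩ | ⟨h1, h2⟩ <;> nlinarith
    · rcases hρ with ⟨h1, h2⟩ | ⟨h1, h2⟩ <;> nlinarith
  have hcρ2 : ∀ ρ ∈ uIcc t r, 0 < 1 - (c - H * ρ) ^ 2 := by
    intro ρ hρ
    obtain ⟨h1, h2⟩ := hcρ ρ hρ
    nlinarith
  -- continuity of G on Icc 0 ℓ
  have hGcont : ContinuousOn G (Icc 0 ℓ) := by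
    apply ContinuousOn.div
    · exact (hscont.sub (continuous_const.mul continuous_id)).continuousOn
    · exact (Real.continuous_sqrt.comp
        (continuous_const.sub ((hscont.sub (continuous_const.mul continuous_id)).pow 2))).continuousOn
    · intro ρ hρ
      exact (Real.sqrt_pos.mpr (hden ρ hρ)).ne'
  have htIcc : t ∈ Icc (0:ℝ) ℓ := ht
  have hrIcc : r ∈ Icc (0:ℝ) ℓ := ⟨hr.1.le, hr.2.le⟩
  have hsub : uIcc t r ⊆ Icc (0:ℝ) ℓ := by
    intro ρ hρ
    rw [Set.mem_uIcc] at hρ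
    rcases hρ with ⟨h1, h2⟩ | ⟨h1, h2⟩ <;>
      exact ⟨by cases ht; cases hrIcc; linarith, by cases ht; cases hrIcc; linarith⟩
  -- integrability of G
  have hG0t : IntervalIntegrable G MeasureTheory.volume 0 t := by
    apply ContinuousOn.intervalIntegrable
    apply hGcont.mono
    rw [Set.uIcc_of_le htIcc.1]
    exact Icc_subset_Icc le_rfl htIcc.2
  have hG0r : IntervalIntegrable G MeasureTheory.volume 0 r := by
    apply ContinuousOn.intervalIntegrable
    apply hGcont.mono
    rw [Set.uIcc_of_le hrIcc.1]
    exact Icc_subset_Icc le_rfl hrIcc.2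
  have hGtr : IntervalIntegrable G MeasureTheory.volume t r :=
    (hGcont.mono hsub).intervalIntegrable
  -- integrability of f
  have hfcont : ContinuousOn f (uIcc t r) := by
    apply ContinuousOn.neg
    apply ContinuousOn.div
    · exact (continuous_const.sub (continuous_const.mul continuous_id)).continuousOn
    · exact (Real.continuous_sqrt.comp
        (continuous_const.sub ((continuous_const.sub (continuous_const.mul continuous_id)).pow 2))).continuousOn
    · intro ρ hρ
      exact (Real.sqrt_pos.mpr (hcρ2 ρ hρ)).ne'
  have hftr : IntervalIntegrable f MeasureTheory.volume t r := hfcont.intervalIntegrable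
  -- u r - u t
  have hu_diff : u r - u t = ∫ ρ in t..r, G ρ := by
    rw [hu r, hu t]
    exact integral_interval_sub_left hG0r hG0t
  -- FTC for φ
  set φ : ℝ → ℝ := fun ρ => -(1 / H) * Real.sqrt (1 - (c - H * ρ) ^ 2) with hφ
  have hderiv : ∀ ρ ∈ uIcc t r, HasDerivAt φ (f ρ) ρ := by
    intro ρ hρ
    have hlin : HasDerivAt (fun x : ℝ => c - H * x) (-H) ρ := by
      simpa using (((hasDerivAt_id ρ).const_mul H).const_sub c)
    have h1 : HasDerivAt (fun x : ℝ => 1 - (c - H * x) ^ 2)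
        (-(2 * (c - H * ρ) * (0 - H))) ρ := by
      exact ((hlin.pow 2).const_sub 1).congr_deriv (by ring)
    have h2 : HasDerivAt (fun x : ℝ => Real.sqrt (1 - (c - H * x) ^ 2))
        ((-(2 * (c - H * ρ) * (0 - H))) / (2 * Real.sqrt (1 - (c - H * ρ) ^ 2))) ρ :=
      h1.sqrt (hcρ2 ρ hρ).ne'
    have h3 := h2.const_mul (-(1 / H))
    refine h3.congr_deriv ?_
    have hs : Real.sqrt (1 - (c - H * ρ) ^ 2) ≠ 0 :=
      (Real.sqrt_pos.mpr (hcρ2 ρ hρ)).ne'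
    simp only [hf]
    field_simp
    ring
  have hφ_diff : φ r - φ t = ∫ ρ in t..r, f ρ :=
    (integral_eq_sub_of_hasDerivAt hderiv hftr).symm
  -- combine
  have hcomb : (u r - u t) + (φ r - φ t) = ∫ ρ in t..r, (G ρ + f ρ) := by
    rw [hu_diff, hφ_diff, integral_add hGtr hftr]
  -- pointwise nonneg / nonpos
  have hpt : ∀ ρ ∈ uIcc t r, (t ≤ ρ → 0 ≤ G ρ + f ρ) ∧ (ρ ≤ t → G ρ + f ρ ≤ 0) := by
    intro ρ hρ
    have hρℓ := hsub hρ
    have hb1 : |s ρ - H * ρ| < 1 := lt_of_le_of_lt (hbd ρ hρℓ) hlt1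
    have hb2 : |c - H * ρ| < 1 := abs_lt.mpr (hcρ ρ hρ)
    constructor
    · intro hle
      have hs1 : c ≤ s ρ := hsmono hle
      have := gmono hb2 hb1 (by linarith : c - H * ρ ≤ s ρ - H * ρ)
      simp only [hG, hf]
      linarith
    · intro hle
      have hs1 : s ρ ≤ c := hsmono hle
      have := gmono hb1 hb2 (by linarith : s ρ - H * ρ ≤ c - H * ρ)
      simp only [hG, hf]
      linarith
  have hnonneg : 0 ≤ (u r - u t) + (φ r - φ t) := by
    rw [hcomb]
    rcases le_or_gt t r with hle | hlt
    · apply integral_nonneg hle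
      intro ρ hρ
      exact ((hpt ρ (by rw [Set.uIcc_of_le hle]; exact hρ)).1) hρ.1
    · rw [integral_symm]
      have h0 : 0 ≤ ∫ ρ in r..t, -(G ρ + f ρ) := by
        apply integral_nonneg hlt.le
        intro ρ hρ
        have := ((hpt ρ (by rw [Set.uIcc_of_ge hlt.le]; exact hρ)).2) hρ.2
        linarith
      rw [integral_neg] at h0
      linarith
  simp only [hφ] at hnonneg
  linarith
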